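/- For 9 ≤ d ≤ 12, the degree-d graded component of ℤ[h,s]/(3hs² − 6h⁵s + 2h⁹, s³ − 12h⁸s + 5h¹²) (deg h = 1, deg s = 4) is isomorphic as a ℤ-module to ℤ³/ℤ·(3,−6,2), and this quotient is a free ℤ-module of rank 2. -/

import Mathlib

open MvPolynomial

/-- The defining ideal of the Chow ring of the Cayley plane, `h = X 0`, `s = X 1`. -/
noncomputable abbrev cayleyIdeal : Ideal (MvPolynomial (Fin 2) ℤ) :=
  Ideal.span ({3 * X 0 * X 1 ^ 2 - 6 * X 0 ^ 5 * X 1 + 2 * X 0 ^ 9,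
               X 1 ^ 3 - 12 * X 0 ^ 8 * X 1 + 5 * X 0 ^ 12} :
    Set (MvPolynomial (Fin 2) ℤ))

/-- The degree-`d` graded component of the Chow ring of the Cayley plane
(grading `deg h = 1`, `deg s = 4`). -/
noncomputable abbrev cayleyComponent (d : ℕ) :
    Submodule ℤ (MvPolynomial (Fin 2) ℤ ⧸ cayleyIdeal) :=
  Submodule.map (Ideal.Quotient.mkₐ ℤ cayleyIdeal).toLinearMap
    (weightedHomogeneousSubmodule ℤ (![1, 4] : Fin 2 → ℕ) d)

namespace CayleyAux

abbrev Qt := (Fin 3 → ℤ) ⧸ Submodule.span ℤ ({![3, -6, 2]} : Set (Fin 3 → ℤ))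

noncomputable def V (d a b : ℕ) : Qt :=
  if a = d - 8 ∧ b = 2 then Submodule.Quotient.mk ![1,0,0]
  else if a = d - 4 ∧ b = 1 then Submodule.Quotient.mk ![0,1,0]
  else if a = d ∧ b = 0 then Submodule.Quotient.mk ![0,0,1]
  else if a = 0 ∧ b = 3 ∧ d = 12 then Submodule.Quotient.mk ![0,12,-5]
  else 0

lemma relQ : (3:ℤ) • (Submodule.Quotient.mk ![1,0,0] : Qt) - 6 • Submodule.Quotient.mk ![0,1,0]
    + 2 • Submodule.Quotient.mk ![0,0,1] = 0 := by
  have h1 : (3:ℤ) • (![1,0,0] : Fin 3 → ℤ) - 6 • ![0,1,0] + 2 • ![0,0,1] = ![3,-6,2] := by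
    funext i; fin_cases i <;> simp
  rw [← Submodule.Quotient.mk_smul, ← Submodule.Quotient.mk_smul, ← Submodule.Quotient.mk_smul,
    ← Submodule.Quotient.mk_sub, ← Submodule.Quotient.mk_add, h1,
    Submodule.Quotient.mk_eq_zero]
  exact Submodule.mem_span_singleton_self _

lemma relQ2 : (Submodule.Quotient.mk ![0,12,-5] : Qt) - (12:ℤ) • Submodule.Quotient.mk ![0,1,0]
    + 5 • Submodule.Quotient.mk ![0,0,1] = 0 := by
  have h1 : (![0,12,-5] : Fin 3 → ℤ) - (12:ℤ) • ![0,1,0] + 5 • ![0,0,1] = 0 := by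
    funext i; fin_cases i <;> simp
  rw [← Submodule.Quotient.mk_smul, ← Submodule.Quotient.mk_smul,
    ← Submodule.Quotient.mk_sub, ← Submodule.Quotient.mk_add, h1, Submodule.Quotient.mk_zero]

lemma V1 (d a b : ℕ) (h9 : 9 ≤ d) (h12 : d ≤ 12) :
    (3:ℤ) • V d (a+1) (b+2) - 6 • V d (a+5) (b+1) + 2 • V d (a+9) b = 0 := by
  by_cases h : a + 9 = d ∧ b = 0
  · have e1 : V d (a+1) (b+2) = Submodule.Quotient.mk ![1,0,0] := by
      unfold V; rw [if_pos ⟨by omega, by omega⟩]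
    have e2 : V d (a+5) (b+1) = Submodule.Quotient.mk ![0,1,0] := by
      unfold V; rw [if_neg (by omega), if_pos ⟨by omega, by omega⟩]
    have e3 : V d (a+9) b = Submodule.Quotient.mk ![0,0,1] := by
      unfold V; rw [if_neg (by omega), if_neg (by omega), if_pos ⟨by omega, by omega⟩]
    rw [e1, e2, e3]; exact relQ
  · have e1 : V d (a+1) (b+2) = 0 := by
      unfold V; rw [if_neg (by omega), if_neg (by omega), if_neg (by omega), if_neg (by omega)]
    have e2 : V d (a+5) (b+1) = 0 := by
      unfold V; rw [if_neg (by omega), if_neg (by omega), if_neg (by omega), if_neg (by omega)]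
    have e3 : V d (a+9) b = 0 := by
      unfold V; rw [if_neg (by omega), if_neg (by omega), if_neg (by omega), if_neg (by omega)]
    rw [e1, e2, e3]; simp

lemma V2 (d a b : ℕ) (h9 : 9 ≤ d) (h12 : d ≤ 12) :
    V d a (b+3) - (12:ℤ) • V d (a+8) (b+1) + 5 • V d (a+12) b = 0 := by
  by_cases h : a = 0 ∧ b = 0 ∧ d = 12
  · have e1 : V d a (b+3) = Submodule.Quotient.mk ![0,12,-5] := by
      unfold V
      rw [if_neg (by omega), if_neg (by omega), if_neg (by omega),
        if_pos ⟨by omega, by omega, by omega⟩]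
    have e2 : V d (a+8) (b+1) = Submodule.Quotient.mk ![0,1,0] := by
      unfold V; rw [if_neg (by omega), if_pos ⟨by omega, by omega⟩]
    have e3 : V d (a+12) b = Submodule.Quotient.mk ![0,0,1] := by
      unfold V; rw [if_neg (by omega), if_neg (by omega), if_pos ⟨by omega, by omega⟩]
    rw [e1, e2, e3]; exact relQ2
  · have e1 : V d a (b+3) = 0 := by
      unfold V; rw [if_neg (by omega), if_neg (by omega), if_neg (by omega), if_neg (by omega)]
    have e2 : V d (a+8) (b+1) = 0 := by
      unfold V; rw [if_neg (by omega), if_neg (by omega), if_neg (by omega), if_neg (by omega)]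
    have e3 : V d (a+12) b = 0 := by
      unfold V; rw [if_neg (by omega), if_neg (by omega), if_neg (by omega), if_neg (by omega)]
    rw [e1, e2, e3]; simp

noncomputable def L (d : ℕ) : MvPolynomial (Fin 2) ℤ →ₗ[ℤ] Qt :=
  (Finsupp.lsum ℤ fun (m : Fin 2 →₀ ℕ) => LinearMap.toSpanSingleton ℤ Qt (V d (m 0) (m 1))) ∘ₗ
    (AddMonoidAlgebra.coeffLinearEquiv ℤ).toLinearMap

lemma L_monomial (d : ℕ) (m : Fin 2 →₀ ℕ) (c : ℤ) :
    L d (monomial m c) = c • V d (m 0) (m 1) := by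
  rw [← single_eq_monomial]
  exact Finsupp.lsum_single ℤ (fun (m : Fin 2 →₀ ℕ) => LinearMap.toSpanSingleton ℤ Qt (V d (m 0) (m 1))) m c

lemma X_eq_mono (i : Fin 2) : (X i : MvPolynomial (Fin 2) ℤ) = monomial (Finsupp.single i 1) 1 :=
  rfl

lemma r1_eq : (3 * X 0 * X 1 ^ 2 - 6 * X 0 ^ 5 * X 1 + 2 * X 0 ^ 9 : MvPolynomial (Fin 2) ℤ) =
    monomial (Finsupp.single 0 1 + Finsupp.single 1 2) 3
    - monomial (Finsupp.single 0 5 + Finsupp.single 1 1) 6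
    + monomial (Finsupp.single 0 9) 2 := by
  have h3 : (3 : MvPolynomial (Fin 2) ℤ) = C 3 := by simp
  have h6 : (6 : MvPolynomial (Fin 2) ℤ) = C 6 := by simp
  have h2 : (2 : MvPolynomial (Fin 2) ℤ) = C 2 := by simp
  rw [h3, h6, h2]
  simp only [X_eq_mono, monomial_pow, one_pow, Finsupp.smul_single, smul_eq_mul, mul_one,
    monomial_mul, C_mul_monomial, one_mul]

lemma r2_eq : (X 1 ^ 3 - 12 * X 0 ^ 8 * X 1 + 5 * X 0 ^ 12 : MvPolynomial (Fin 2) ℤ) =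
    monomial (Finsupp.single 1 3) 1
    - monomial (Finsupp.single 0 8 + Finsupp.single 1 1) 12
    + monomial (Finsupp.single 0 12) 5 := by
  have ha : (12 : MvPolynomial (Fin 2) ℤ) = C 12 := by simp
  have hb : (5 : MvPolynomial (Fin 2) ℤ) = C 5 := by simp
  rw [ha, hb]
  simp only [X_eq_mono, monomial_pow, one_pow, Finsupp.smul_single, smul_eq_mul, mul_one,
    monomial_mul, C_mul_monomial, one_mul]

lemma mono_mul_r1 (u : Fin 2 →₀ ℕ) (a : ℤ) :
    monomial u a * (3 * X 0 * X 1 ^ 2 - 6 * X 0 ^ 5 * X 1 + 2 * X 0 ^ 9 : MvPolynomial (Fin 2) ℤ)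
    = monomial (u + (Finsupp.single 0 1 + Finsupp.single 1 2)) (a * 3)
      - monomial (u + (Finsupp.single 0 5 + Finsupp.single 1 1)) (a * 6)
      + monomial (u + Finsupp.single 0 9) (a * 2) := by
  rw [r1_eq, mul_add, mul_sub, monomial_mul, monomial_mul, monomial_mul]

lemma mono_mul_r2 (u : Fin 2 →₀ ℕ) (a : ℤ) :
    monomial u a * (X 1 ^ 3 - 12 * X 0 ^ 8 * X 1 + 5 * X 0 ^ 12 : MvPolynomial (Fin 2) ℤ)
    = monomial (u + Finsupp.single 1 3) (a * 1)
      - monomial (u + (Finsupp.single 0 8 + Finsupp.single 1 1)) (a * 12)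
      + monomial (u + Finsupp.single 0 12) (a * 5) := by
  rw [r2_eq, mul_add, mul_sub, monomial_mul, monomial_mul, monomial_mul]

lemma app0 (u : Fin 2 →₀ ℕ) (n m : ℕ) :
    (u + (Finsupp.single (0 : Fin 2) n + Finsupp.single 1 m) : Fin 2 →₀ ℕ) 0 = u 0 + n := by
  simp [Finsupp.single_apply]

lemma app1 (u : Fin 2 →₀ ℕ) (n m : ℕ) :
    (u + (Finsupp.single (0 : Fin 2) n + Finsupp.single 1 m) : Fin 2 →₀ ℕ) 1 = u 1 + m := by
  simp [Finsupp.single_apply]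

lemma app0' (u : Fin 2 →₀ ℕ) (n : ℕ) : (u + Finsupp.single (0 : Fin 2) n : Fin 2 →₀ ℕ) 0 = u 0 + n := by
  simp [Finsupp.single_apply]

lemma app1' (u : Fin 2 →₀ ℕ) (n : ℕ) : (u + Finsupp.single (0 : Fin 2) n : Fin 2 →₀ ℕ) 1 = u 1 := by
  simp [Finsupp.single_apply]

lemma app0'' (u : Fin 2 →₀ ℕ) (m : ℕ) : (u + Finsupp.single (1 : Fin 2) m : Fin 2 →₀ ℕ) 0 = u 0 := by
  simp [Finsupp.single_apply]

lemma app1'' (u : Fin 2 →₀ ℕ) (m : ℕ) : (u + Finsupp.single (1 : Fin 2) m : Fin 2 →₀ ℕ) 1 = u 1 + m := by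
  simp [Finsupp.single_apply]

lemma L_mul_r1 (d : ℕ) (h9 : 9 ≤ d) (h12 : d ≤ 12) (x : MvPolynomial (Fin 2) ℤ) :
    L d (x * (3 * X 0 * X 1 ^ 2 - 6 * X 0 ^ 5 * X 1 + 2 * X 0 ^ 9)) = 0 := by
  induction x using MvPolynomial.induction_on' with
  | monomial u a =>
    rw [mono_mul_r1, map_add, map_sub, L_monomial, L_monomial, L_monomial,
      app0, app1, app0, app1, app0', app1']
    have h := V1 d (u 0) (u 1) h9 h12
    have : (a*3) • V d (u 0 + 1) (u 1 + 2) - (a*6) • V d (u 0 + 5) (u 1 + 1)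
        + (a*2) • V d (u 0 + 9) (u 1)
        = a • ((3:ℤ) • V d (u 0 + 1) (u 1 + 2) - 6 • V d (u 0 + 5) (u 1 + 1)
          + 2 • V d (u 0 + 9) (u 1)) := by
      module
    rw [this, h, smul_zero]
  | add p q hp hq => rw [add_mul, map_add, hp, hq, add_zero]

lemma L_mul_r2 (d : ℕ) (h9 : 9 ≤ d) (h12 : d ≤ 12) (x : MvPolynomial (Fin 2) ℤ) :
    L d (x * (X 1 ^ 3 - 12 * X 0 ^ 8 * X 1 + 5 * X 0 ^ 12)) = 0 := by
  induction x using MvPolynomial.induction_on' with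
  | monomial u a =>
    rw [mono_mul_r2, map_add, map_sub, L_monomial, L_monomial, L_monomial,
      app0'', app1'', app0, app1, app0', app1']
    have h := V2 d (u 0) (u 1) h9 h12
    have : (a*1) • V d (u 0) (u 1 + 3) - (a*12) • V d (u 0 + 8) (u 1 + 1)
        + (a*5) • V d (u 0 + 12) (u 1)
        = a • (V d (u 0) (u 1 + 3) - (12:ℤ) • V d (u 0 + 8) (u 1 + 1)
          + 5 • V d (u 0 + 12) (u 1)) := by
      module
    rw [this, h, smul_zero]
  | add p q hp hq => rw [add_mul, map_add, hp, hq, add_zero]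

lemma L_kills (d : ℕ) (h9 : 9 ≤ d) (h12 : d ≤ 12) :
    (cayleyIdeal.restrictScalars ℤ) ≤ LinearMap.ker (L d) := by
  intro p hp
  rw [Submodule.restrictScalars_mem] at hp
  obtain ⟨x, y, rfl⟩ := Ideal.mem_span_pair.mp hp
  rw [LinearMap.mem_ker, map_add, L_mul_r1 d h9 h12, L_mul_r2 d h9 h12, add_zero]

noncomputable def psi (d : ℕ) (h9 : 9 ≤ d) (h12 : d ≤ 12) :
    (MvPolynomial (Fin 2) ℤ ⧸ cayleyIdeal) →ₗ[ℤ] Qt :=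
  (Submodule.liftQ (cayleyIdeal.restrictScalars ℤ) (L d) (L_kills d h9 h12)) ∘ₗ
    (Submodule.Quotient.restrictScalarsEquiv ℤ cayleyIdeal).symm.toLinearMap

lemma psi_mk (d : ℕ) (h9 : 9 ≤ d) (h12 : d ≤ 12) (p : MvPolynomial (Fin 2) ℤ) :
    psi d h9 h12 (Ideal.Quotient.mk cayleyIdeal p) = L d p := by
  rfl

end CayleyAux
namespace CayleyAux

noncomputable def M0 (d : ℕ) : MvPolynomial (Fin 2) ℤ :=
  monomial (Finsupp.single 0 (d-8) + Finsupp.single 1 2) 1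
noncomputable def M1 (d : ℕ) : MvPolynomial (Fin 2) ℤ :=
  monomial (Finsupp.single 0 (d-4) + Finsupp.single 1 1) 1
noncomputable def M2 (d : ℕ) : MvPolynomial (Fin 2) ℤ :=
  monomial (Finsupp.single 0 d) 1

noncomputable def phi0 (d : ℕ) : (Fin 3 → ℤ) →ₗ[ℤ] MvPolynomial (Fin 2) ℤ where
  toFun x := x 0 • M0 d + x 1 • M1 d + x 2 • M2 d
  map_add' x y := by simp only [Pi.add_apply, add_smul]; abel
  map_smul' c x := by simp only [Pi.smul_apply, smul_eq_mul, mul_smul, RingHom.id_apply,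
    smul_add]

noncomputable def phi (d : ℕ) : (Fin 3 → ℤ) →ₗ[ℤ] (MvPolynomial (Fin 2) ℤ ⧸ cayleyIdeal) :=
  (Ideal.Quotient.mkₐ ℤ cayleyIdeal).toLinearMap ∘ₗ phi0 d

lemma L_M0 (d : ℕ) : L d (M0 d) = Submodule.Quotient.mk ![1,0,0] := by
  have h0 : (Finsupp.single (0:Fin 2) (d-8) + Finsupp.single 1 2 : Fin 2 →₀ ℕ) 0 = d - 8 := by
    simp [Finsupp.single_apply]
  have h1 : (Finsupp.single (0:Fin 2) (d-8) + Finsupp.single 1 2 : Fin 2 →₀ ℕ) 1 = 2 := by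
    simp [Finsupp.single_apply]
  rw [M0, L_monomial, h0, h1, one_smul]
  unfold V
  rw [if_pos ⟨rfl, rfl⟩]

lemma L_M1 (d : ℕ) : L d (M1 d) = Submodule.Quotient.mk ![0,1,0] := by
  have h0 : (Finsupp.single (0:Fin 2) (d-4) + Finsupp.single 1 1 : Fin 2 →₀ ℕ) 0 = d - 4 := by
    simp [Finsupp.single_apply]
  have h1 : (Finsupp.single (0:Fin 2) (d-4) + Finsupp.single 1 1 : Fin 2 →₀ ℕ) 1 = 1 := by
    simp [Finsupp.single_apply]
  rw [M1, L_monomial, h0, h1, one_smul]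
  unfold V
  rw [if_neg (by omega), if_pos ⟨rfl, rfl⟩]

lemma L_M2 (d : ℕ) : L d (M2 d) = Submodule.Quotient.mk ![0,0,1] := by
  have h0 : (Finsupp.single (0 : Fin 2) d : Fin 2 →₀ ℕ) 0 = d := by simp
  have h1 : (Finsupp.single (0 : Fin 2) d : Fin 2 →₀ ℕ) 1 = 0 := by simp
  rw [M2, L_monomial, h0, h1, one_smul]
  unfold V
  rw [if_neg (by omega), if_neg (by omega), if_pos ⟨rfl, rfl⟩]

lemma psi_phi (d : ℕ) (h9 : 9 ≤ d) (h12 : d ≤ 12) (x : Fin 3 → ℤ) :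
    psi d h9 h12 (phi d x) = Submodule.Quotient.mk x := by
  have : phi d x = Ideal.Quotient.mk cayleyIdeal (x 0 • M0 d + x 1 • M1 d + x 2 • M2 d) := rfl
  rw [this, psi_mk, map_add, map_add, map_smul, map_smul, map_smul, L_M0, L_M1, L_M2,
    ← Submodule.Quotient.mk_smul, ← Submodule.Quotient.mk_smul, ← Submodule.Quotient.mk_smul,
    ← Submodule.Quotient.mk_add, ← Submodule.Quotient.mk_add]
  congr 1
  funext i; fin_cases i <;> simp

lemma ker_phi (d : ℕ) (h9 : 9 ≤ d) (h12 : d ≤ 12) :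
    LinearMap.ker (phi d) = Submodule.span ℤ ({![3, -6, 2]} : Set (Fin 3 → ℤ)) := by
  apply le_antisymm
  · intro x hx
    rw [LinearMap.mem_ker] at hx
    have := psi_phi d h9 h12 x
    rw [hx, map_zero] at this
    rw [← Submodule.Quotient.mk_eq_zero]
    exact this.symm
  · rw [Submodule.span_le, Set.singleton_subset_iff]
    rw [SetLike.mem_coe, LinearMap.mem_ker]
    have hval : phi d ![3,-6,2] =
        Ideal.Quotient.mk cayleyIdeal ((3:ℤ) • M0 d + (-6:ℤ) • M1 d + (2:ℤ) • M2 d) := by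
      have : phi d ![3,-6,2] = Ideal.Quotient.mk cayleyIdeal
          ((![3,-6,2] : Fin 3 → ℤ) 0 • M0 d + (![3,-6,2] : Fin 3 → ℤ) 1 • M1 d
            + (![3,-6,2] : Fin 3 → ℤ) 2 • M2 d) := rfl
      rw [this]
      simp only [Matrix.cons_val]
    rw [hval, Ideal.Quotient.eq_zero_iff_mem]
    have heq : (3:ℤ) • M0 d + (-6:ℤ) • M1 d + (2:ℤ) • M2 d =
        monomial (Finsupp.single 0 (d-9)) 1 *
          (3 * X 0 * X 1 ^ 2 - 6 * X 0 ^ 5 * X 1 + 2 * X 0 ^ 9) := by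
      rw [mono_mul_r1]
      have i1 : Finsupp.single (0:Fin 2) (d-9) + (Finsupp.single 0 1 + Finsupp.single 1 2)
          = Finsupp.single 0 (d-8) + Finsupp.single 1 2 := by
        ext i; fin_cases i <;> simp [Finsupp.single_apply] <;> omega
      have i2 : Finsupp.single (0:Fin 2) (d-9) + (Finsupp.single 0 5 + Finsupp.single 1 1)
          = Finsupp.single 0 (d-4) + Finsupp.single 1 1 := by
        ext i; fin_cases i <;> simp [Finsupp.single_apply] <;> omega
      have i3 : Finsupp.single (0:Fin 2) (d-9) + Finsupp.single 0 9 = Finsupp.single 0 d := by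
        ext i; fin_cases i <;> simp [Finsupp.single_apply] <;> omega
      rw [i1, i2, i3, M0, M1, M2]
      simp [smul_monomial, sub_eq_add_neg]
    rw [heq]
    exact Ideal.mul_mem_left _ _ (Ideal.subset_span (Set.mem_insert _ _))

end CayleyAux
namespace CayleyAux

lemma weight_single (n : ℕ) (i : Fin 2) (w : Fin 2 → ℕ) :
    Finsupp.weight w (Finsupp.single i n) = n * w i := by
  rw [Finsupp.weight_apply, Finsupp.sum_single_index] <;> simp

lemma weight_single01 (n m : ℕ) :
    (Finsupp.weight ![1,4] (Finsupp.single (0:Fin 2) n + Finsupp.single 1 m) : ℕ) = n + 4 * m := by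
  rw [map_add, weight_single, weight_single]
  simp
  ring

lemma M0_hom (d : ℕ) (h9 : 9 ≤ d) : M0 d ∈ weightedHomogeneousSubmodule ℤ ![1,4] d := by
  rw [mem_weightedHomogeneousSubmodule]
  apply isWeightedHomogeneous_monomial
  rw [weight_single01]; omega

lemma M1_hom (d : ℕ) (h9 : 9 ≤ d) : M1 d ∈ weightedHomogeneousSubmodule ℤ ![1,4] d := by
  rw [mem_weightedHomogeneousSubmodule]
  apply isWeightedHomogeneous_monomial
  rw [weight_single01]; omega

lemma M2_hom (d : ℕ) : M2 d ∈ weightedHomogeneousSubmodule ℤ ![1,4] d := by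
  rw [mem_weightedHomogeneousSubmodule]
  apply isWeightedHomogeneous_monomial
  rw [weight_single]
  simp

lemma mk_M0_mem (d : ℕ) :
    Ideal.Quotient.mk cayleyIdeal (M0 d) ∈ LinearMap.range (phi d) :=
  ⟨![1,0,0], by
    show Ideal.Quotient.mk cayleyIdeal
      ((![1,0,0] : Fin 3 → ℤ) 0 • M0 d + (![1,0,0] : Fin 3 → ℤ) 1 • M1 d
        + (![1,0,0] : Fin 3 → ℤ) 2 • M2 d) = _
    simp only [Matrix.cons_val]
    norm_num⟩

lemma mk_M1_mem (d : ℕ) :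
    Ideal.Quotient.mk cayleyIdeal (M1 d) ∈ LinearMap.range (phi d) :=
  ⟨![0,1,0], by
    show Ideal.Quotient.mk cayleyIdeal
      ((![0,1,0] : Fin 3 → ℤ) 0 • M0 d + (![0,1,0] : Fin 3 → ℤ) 1 • M1 d
        + (![0,1,0] : Fin 3 → ℤ) 2 • M2 d) = _
    simp only [Matrix.cons_val]
    norm_num⟩

lemma mk_M2_mem (d : ℕ) :
    Ideal.Quotient.mk cayleyIdeal (M2 d) ∈ LinearMap.range (phi d) :=
  ⟨![0,0,1], by
    show Ideal.Quotient.mk cayleyIdeal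
      ((![0,0,1] : Fin 3 → ℤ) 0 • M0 d + (![0,0,1] : Fin 3 → ℤ) 1 • M1 d
        + (![0,0,1] : Fin 3 → ℤ) 2 • M2 d) = _
    simp only [Matrix.cons_val]
    norm_num⟩

/-- Submodule used to decompose weighted homogeneous polynomials. -/
noncomputable def W (d : ℕ) : Submodule ℤ (MvPolynomial (Fin 2) ℤ) :=
  Submodule.span ℤ {M0 d, M1 d, M2 d} ⊔ cayleyIdeal.restrictScalars ℤ

lemma finsupp2_eq (m : Fin 2 →₀ ℕ) :
    m = Finsupp.single 0 (m 0) + Finsupp.single 1 (m 1) := by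
  ext i; fin_cases i <;> simp [Finsupp.single_apply]

lemma monomial_mem_W (d : ℕ) (h9 : 9 ≤ d) (h12 : d ≤ 12) (m : Fin 2 →₀ ℕ) (c : ℤ)
    (hm : m 0 + 4 * m 1 = d) : monomial m c ∈ W d := by
  have hm1 : m 1 ≤ 3 := by omega
  interval_cases h : m 1
  · have hmeq : m = Finsupp.single 0 d := by
      rw [finsupp2_eq m, h]; ext i; fin_cases i <;> simp [Finsupp.single_apply] <;> omega
    have : monomial m c = c • M2 d := by
      rw [hmeq, M2, smul_monomial, smul_eq_mul, mul_one]
    rw [this]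
    exact Submodule.smul_mem _ _ (Submodule.mem_sup_left (Submodule.subset_span (by simp)))
  · have hmeq : m = Finsupp.single 0 (d-4) + Finsupp.single 1 1 := by
      rw [finsupp2_eq m, h]; ext i; fin_cases i <;> simp [Finsupp.single_apply] <;> omega
    have : monomial m c = c • M1 d := by
      rw [hmeq, M1, smul_monomial, smul_eq_mul, mul_one]
    rw [this]
    exact Submodule.smul_mem _ _ (Submodule.mem_sup_left (Submodule.subset_span (by simp)))
  · have hmeq : m = Finsupp.single 0 (d-8) + Finsupp.single 1 2 := by
      rw [finsupp2_eq m, h]; ext i; fin_cases i <;> simp [Finsupp.single_apply] <;> omega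
    have : monomial m c = c • M0 d := by
      rw [hmeq, M0, smul_monomial, smul_eq_mul, mul_one]
    rw [this]
    exact Submodule.smul_mem _ _ (Submodule.mem_sup_left (Submodule.subset_span (by simp)))
  · have hd : d = 12 := by omega
    have hm0 : m 0 = 0 := by omega
    have hmeq : m = Finsupp.single 1 3 := by
      rw [finsupp2_eq m, h, hm0]; ext i; fin_cases i <;> simp [Finsupp.single_apply]
    have key : monomial m c =
        c • (X 1 ^ 3 - 12 * X 0 ^ 8 * X 1 + 5 * X 0 ^ 12 : MvPolynomial (Fin 2) ℤ)
        + (12*c) • M1 d - (5*c) • M2 d := by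
      subst hd
      rw [hmeq, r2_eq, M1, M2]
      have e1 : (12 - 4 : ℕ) = 8 := by norm_num
      rw [e1]
      simp only [smul_sub, smul_add, smul_monomial, smul_eq_mul, mul_one, mul_comm]
      abel_nf
      simp [mul_comm]
    rw [key]
    apply Submodule.sub_mem
    apply Submodule.add_mem
    · exact Submodule.smul_mem _ _ (Submodule.mem_sup_right
        (Ideal.subset_span (Set.mem_insert_of_mem _ rfl)))
    · exact Submodule.smul_mem _ _ (Submodule.mem_sup_left (Submodule.subset_span (by simp)))
    · exact Submodule.smul_mem _ _ (Submodule.mem_sup_left (Submodule.subset_span (by simp)))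

lemma hom_le_W (d : ℕ) (h9 : 9 ≤ d) (h12 : d ≤ 12) :
    weightedHomogeneousSubmodule ℤ ![1,4] d ≤ W d := by
  intro p hp
  rw [mem_weightedHomogeneousSubmodule] at hp
  rw [← p.support_sum_monomial_coeff]
  apply Submodule.sum_mem
  intro m hmem
  have hw := hp (mem_support_iff.mp hmem)
  apply monomial_mem_W d h9 h12
  have := weight_single01 (m 0) (m 1)
  rw [← finsupp2_eq m] at this
  rw [← this]
  exact hw

lemma range_phi (d : ℕ) (h9 : 9 ≤ d) (h12 : d ≤ 12) :
    LinearMap.range (phi d) = cayleyComponent d := by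
  apply le_antisymm
  · rintro _ ⟨x, rfl⟩
    refine ⟨phi0 d x, ?_, rfl⟩
    show x 0 • M0 d + x 1 • M1 d + x 2 • M2 d ∈ _
    exact Submodule.add_mem _ (Submodule.add_mem _
      (Submodule.smul_mem _ _ (M0_hom d h9)) (Submodule.smul_mem _ _ (M1_hom d h9)))
      (Submodule.smul_mem _ _ (M2_hom d))
  · rintro _ ⟨p, hp, rfl⟩
    have hpW := hom_le_W d h9 h12 hp
    have hW : W d ≤ Submodule.comap (Ideal.Quotient.mkₐ ℤ cayleyIdeal).toLinearMap
        (LinearMap.range (phi d)) := by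
      rw [W, sup_le_iff]
      constructor
      · rw [Submodule.span_le]
        rintro q hq
        rcases hq with h | h | h <;> subst h
        · exact mk_M0_mem d
        · exact mk_M1_mem d
        · exact mk_M2_mem d
      · intro q hq
        rw [Submodule.restrictScalars_mem] at hq
        rw [Submodule.mem_comap]
        show Ideal.Quotient.mk cayleyIdeal q ∈ _
        rw [Ideal.Quotient.eq_zero_iff_mem.mpr hq]
        exact Submodule.zero_mem _
    exact hW hpW

noncomputable def quotEquiv : Qt ≃ₗ[ℤ] (Fin 2 → ℤ) := by
  refine LinearEquiv.ofLinear
    (Submodule.liftQ _ (Matrix.mulVecLin !![-2,0,3; 2,1,0]) ?_)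
    ((Submodule.span ℤ ({![3, -6, 2]} : Set (Fin 3 → ℤ))).mkQ ∘ₗ
      Matrix.mulVecLin !![1,0; -2,1; 1,0]) ?_ ?_
  · rw [Submodule.span_le, Set.singleton_subset_iff, SetLike.mem_coe, LinearMap.mem_ker]
    rw [Matrix.mulVecLin_apply]
    funext i
    fin_cases i <;> simp [Matrix.mulVec, dotProduct, Fin.sum_univ_three]
  · apply LinearMap.ext
    intro x
    simp only [LinearMap.coe_comp, Function.comp_apply, Matrix.mulVecLin_apply,
      Submodule.mkQ_apply, LinearMap.id_coe, id_eq, Submodule.liftQ_apply]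
    rw [Matrix.mulVec_mulVec]
    have : (!![-2,0,3; 2,1,0] * !![1,0; -2,1; 1,0] : Matrix (Fin 2) (Fin 2) ℤ) = 1 := by
      decide
    rw [this, Matrix.one_mulVec]
  · apply Submodule.linearMap_qext
    apply LinearMap.ext
    intro x
    simp only [LinearMap.coe_comp, Function.comp_apply, Matrix.mulVecLin_apply,
      Submodule.mkQ_apply, LinearMap.id_coe, id_eq, Submodule.liftQ_apply]
    rw [Submodule.Quotient.eq]
    have : Matrix.mulVec !![1,0; -2,1; 1,0] (Matrix.mulVec !![-2,0,3; 2,1,0] x) - x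
        = (x 2 - x 0) • ![3,-6,2] := by
      funext i
      fin_cases i <;>
        simp [Matrix.mulVec, dotProduct, Fin.sum_univ_three, Fin.sum_univ_two] <;> ring
    rw [this]
    exact Submodule.smul_mem _ _ (Submodule.mem_span_singleton_self _)

end CayleyAux

theorem cayleyComponent_middle_degrees (d : ℕ) (h9 : 9 ≤ d) (h12 : d ≤ 12) :
    Nonempty (cayleyComponent d ≃ₗ[ℤ]
        ((Fin 3 → ℤ) ⧸ Submodule.span ℤ ({![3, -6, 2]} : Set (Fin 3 → ℤ)))) ∧
      Module.Free ℤ ((Fin 3 → ℤ) ⧸ Submodule.span ℤ ({![3, -6, 2]} : Set (Fin 3 → ℤ))) ∧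
      Module.finrank ℤ
        ((Fin 3 → ℤ) ⧸ Submodule.span ℤ ({![3, -6, 2]} : Set (Fin 3 → ℤ))) = 2 := by
  refine ⟨?_, ?_, ?_⟩
  · exact ⟨(LinearEquiv.ofEq _ _ (CayleyAux.range_phi d h9 h12).symm).trans
      ((LinearMap.quotKerEquivRange (CayleyAux.phi d)).symm.trans
        (Submodule.quotEquivOfEq _ _ (CayleyAux.ker_phi d h9 h12)))⟩
  · exact Module.Free.of_equiv CayleyAux.quotEquiv.symm
  · rw [CayleyAux.quotEquiv.finrank_eq, Module.finrank_fin_fun]
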